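/- Let g ∈ ℝ[x₁,…,xₙ] be homogeneous of degree d with compact sublevel set G = {x : g(x) ≤ 1}. Then the coefficient vector g of g is uniquely determined by the moments of the Lebesgue measure on G of orders d and 2d, via g = ((n+d)/(n+2d)) M_d(λ)⁻¹ λ^{(d)}, where M_d(λ)[α,β] = ∫_G x^{α+β} dx (|α| = |β| = d) and λ^{(d)}_α = ∫_G x^α dx (|α| = d). -/

import Mathlib

open MeasureTheory Matrix Set Pointwise

lemma eval_smul_homog {n d : ℕ} (g : MvPolynomial (Fin n) ℝ) (hg : g.IsHomogeneous d)
    (c : ℝ) (x : Fin n → ℝ) :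
    MvPolynomial.eval (c • x) g = c ^ d * MvPolynomial.eval x g := by
  rw [MvPolynomial.eval_eq, MvPolynomial.eval_eq, Finset.mul_sum]
  refine Finset.sum_congr rfl fun σ hσ => ?_
  have hdeg : σ.degree = d := by rw [Finsupp.degree_eq_weight_one]; exact hg (MvPolynomial.mem_support_iff.1 hσ)
  have : ∏ i ∈ σ.support, (c • x) i ^ σ i
      = c ^ d * ∏ i ∈ σ.support, x i ^ σ i := by
    simp only [Pi.smul_apply, smul_eq_mul, mul_pow]
    rw [Finset.prod_mul_distrib, Finset.prod_pow_eq_pow_sum]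
    rw [← hdeg]; rfl
  rw [this]; ring

lemma homog_nonneg {n d : ℕ} (hd : 0 < d) (g : MvPolynomial (Fin n) ℝ)
    (hg : g.IsHomogeneous d)
    (hK : IsCompact {x : Fin n → ℝ | MvPolynomial.eval x g ≤ 1}) (x : Fin n → ℝ) :
    0 ≤ MvPolynomial.eval x g := by
  by_contra h
  push_neg at h
  obtain ⟨r, hr⟩ := hK.isBounded.exists_norm_le
  have hx0 : x ≠ 0 := by
    intro h0
    have h1 := eval_smul_homog g hg 0 x
    rw [zero_smul, zero_pow hd.ne', zero_mul] at h1
    rw [h0, h1] at h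
    linarith
  have hxn : 0 < ‖x‖ := norm_pos_iff.2 hx0
  set t : ℝ := (|r| + 1) / ‖x‖ with ht
  have htpos : 0 < t := by positivity
  have hmem : t • x ∈ {x : Fin n → ℝ | MvPolynomial.eval x g ≤ 1} := by
    have := eval_smul_homog g hg t x
    have : MvPolynomial.eval (t • x) g ≤ 0 := by
      rw [this]
      exact mul_nonpos_of_nonneg_of_nonpos (by positivity) h.le
    exact le_trans this zero_le_one
  have := hr _ hmem
  rw [norm_smul, Real.norm_eq_abs, abs_of_pos htpos, ht, div_mul_cancel₀ _ hxn.ne'] at this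
  have : r ≤ |r| := le_abs_self r
  linarith [le_abs_self r, hr _ hmem, abs_nonneg r]

lemma sublevel_smul {n d : ℕ} (g : MvPolynomial (Fin n) ℝ) (hg : g.IsHomogeneous d)
    {s : ℝ} (hs : 0 < s) :
    {x : Fin n → ℝ | MvPolynomial.eval x g ≤ s ^ d}
      = s • {x : Fin n → ℝ | MvPolynomial.eval x g ≤ 1} := by
  ext x
  rw [Set.mem_smul_set_iff_inv_smul_mem₀ hs.ne']
  simp only [Set.mem_setOf_eq, eval_smul_homog g hg, inv_pow]
  rw [inv_mul_le_iff₀ (pow_pos hs d), mul_one]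

lemma integral_mono_smul_set {n : ℕ} (S : Set (Fin n → ℝ)) (α : Fin n → ℕ) {s : ℝ} (hs : 0 < s) :
    ∫ x in s • S, ∏ i, x i ^ α i
      = s ^ (n + ∑ i, α i) * ∫ x in S, ∏ i, x i ^ α i := by
  have h := Measure.setIntegral_comp_smul_of_pos (volume : Measure (Fin n → ℝ))
    (fun x => ∏ i, x i ^ α i) S hs
  simp only [Pi.smul_apply, smul_eq_mul, mul_pow, Finset.prod_mul_distrib,
    Finset.prod_pow_eq_pow_sum] at h
  rw [integral_const_mul] at h
  rw [Module.finrank_fintype_fun_eq_card, Fintype.card_fin] at h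
  have hsn : (0:ℝ) < s ^ n := pow_pos hs n
  rw [pow_add]
  have hsn' : (s ^ n)⁻¹ ≠ 0 := by positivity
  field_simp at h
  nlinarith [h]

lemma sublevel_integral_scale {n d : ℕ} (hd : 0 < d) (g : MvPolynomial (Fin n) ℝ)
    (hg : g.IsHomogeneous d) (α : Fin n → ℕ) (hα : ∑ i, α i = d) {t : ℝ} (ht : 0 < t) :
    ∫ x in {x : Fin n → ℝ | MvPolynomial.eval x g ≤ t}, ∏ i, x i ^ α i
      = t ^ (((n:ℝ) + d) / d) * ∫ x in {x : Fin n → ℝ | MvPolynomial.eval x g ≤ 1},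
          ∏ i, x i ^ α i := by
  have hdR : (d : ℝ) ≠ 0 := Nat.cast_ne_zero.2 hd.ne'
  set s : ℝ := t ^ (1 / (d : ℝ)) with hs_def
  have hs : 0 < s := Real.rpow_pos_of_pos ht _
  have hsd : s ^ d = t := by
    rw [hs_def, ← Real.rpow_natCast (t ^ (1 / (d:ℝ))) d, ← Real.rpow_mul ht.le]
    rw [one_div, inv_mul_cancel₀ hdR, Real.rpow_one]
  have hset : {x : Fin n → ℝ | MvPolynomial.eval x g ≤ t}
      = s • {x : Fin n → ℝ | MvPolynomial.eval x g ≤ 1} := by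
    rw [← hsd]; exact sublevel_smul g hg hs
  rw [hset, integral_mono_smul_set _ _ hs, hα]
  congr 1
  rw [hs_def, ← Real.rpow_natCast (t ^ (1 / (d:ℝ))) (n + d), ← Real.rpow_mul ht.le]
  congr 1
  push_cast
  ring


lemma key_identity {n d : ℕ} (hd : 0 < d) (g : MvPolynomial (Fin n) ℝ)
    (hg : g.IsHomogeneous d)
    (hK : IsCompact {x : Fin n → ℝ | MvPolynomial.eval x g ≤ 1})
    (α : Fin n → ℕ) (hα : ∑ i, α i = d) :
    ∫ x in {x : Fin n → ℝ | MvPolynomial.eval x g ≤ 1},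
        (∏ i, x i ^ α i) * MvPolynomial.eval x g
      = (((n:ℝ) + d) / ((n:ℝ) + 2 * d))
          * ∫ x in {x : Fin n → ℝ | MvPolynomial.eval x g ≤ 1}, ∏ i, x i ^ α i := by
  classical
  set G : Set (Fin n → ℝ) := {x : Fin n → ℝ | MvPolynomial.eval x g ≤ 1} with hG_def
  have hGc : IsClosed G := isClosed_le (MvPolynomial.continuous_eval g) continuous_const
  have hGm : MeasurableSet G := hGc.measurableSet
  set mono : (Fin n → ℝ) → ℝ := fun x => ∏ i, x i ^ α i with hmono_def
  have hcont : Continuous mono := by fun_prop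
  have hpos : ∀ x, 0 ≤ MvPolynomial.eval x g := homog_nonneg hd g hg hK
  set p : ℝ := ((n:ℝ) + d) / d with hp_def
  have hdR : (0:ℝ) < (d:ℝ) := by exact_mod_cast hd
  have hppos : 0 < p := by positivity
  set I1 : ℝ := ∫ x in G, mono x with hI1_def
  set S : Set ((Fin n → ℝ) × ℝ) :=
    {q : (Fin n → ℝ) × ℝ | 0 < q.2 ∧ q.2 < MvPolynomial.eval q.1 g} with hS_def
  have hSm : MeasurableSet S := by
    apply MeasurableSet.inter
    · exact measurable_snd measurableSet_Ioi
    · exact measurableSet_lt measurable_snd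
        ((MvPolynomial.continuous_eval g).measurable.comp measurable_fst)
  set F : (Fin n → ℝ) × ℝ → ℝ := fun q =>
    Set.indicator G mono q.1 * Set.indicator S (fun _ => (1:ℝ)) q with hF_def
  -- second factor as a function of t
  have hfac : ∀ x t, Set.indicator S (fun _ => (1:ℝ)) (x, t)
      = Set.indicator (Set.Ioo 0 (MvPolynomial.eval x g)) (fun _ => (1:ℝ)) t := by
    intro x t
    rw [Set.indicator_apply, Set.indicator_apply]
    congr 1
  -- integrability of F
  have hFint : Integrable F (volume.prod volume) := by
    obtain ⟨C, hC⟩ := hK.exists_bound_of_continuousOn hcont.continuousOn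
    have hFmeas : AEStronglyMeasurable F (volume.prod volume) := by
      have m1 : Measurable fun q : (Fin n → ℝ) × ℝ => Set.indicator G mono q.1 :=
        ((hcont.measurable).indicator hGm).comp measurable_fst
      have m2 : Measurable (Set.indicator S (fun _ => (1:ℝ))) :=
        measurable_const.indicator hSm
      exact (m1.mul m2).aestronglyMeasurable
    have hsupp : ∀ q : (Fin n → ℝ) × ℝ, q ∉ G ×ˢ Set.Icc (0:ℝ) 1 → F q = 0 := by
      intro q hq
      by_cases hx : q.1 ∈ G
      · have ht : q.2 ∉ Set.Icc (0:ℝ) 1 := fun h => hq ⟨hx, h⟩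
        have hqS : q ∉ S := fun hS' =>
          ht ⟨hS'.1.le, le_of_lt (lt_of_lt_of_le hS'.2 hx)⟩
        simp only [hF_def, Set.indicator_of_notMem hqS, mul_zero]
      · simp only [hF_def, Set.indicator_of_notMem hx, zero_mul]
    have hFeq : Set.indicator (G ×ˢ Set.Icc (0:ℝ) 1) F = F :=
      Set.indicator_eq_self.2 fun q hq => by
        by_contra hmem; exact hq (hsupp q hmem)
    rw [← hFeq]
    rw [integrable_indicator_iff (hGm.prod measurableSet_Icc)]
    apply Measure.integrableOn_of_bounded (M := max C 0)
    · rw [Measure.prod_prod]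
      exact ENNReal.mul_ne_top hK.measure_lt_top.ne measure_Icc_lt_top.ne
    · exact hFmeas
    · refine Filter.Eventually.of_forall fun q => ?_
      have h1 : ‖Set.indicator G mono q.1‖ ≤ max C 0 := by
        by_cases hx : q.1 ∈ G
        · rw [Set.indicator_of_mem hx]
          exact le_trans (hC q.1 hx) (le_max_left _ _)
        · rw [Set.indicator_of_notMem hx, norm_zero]
          exact le_max_right _ _
      have h2 : ‖Set.indicator S (fun _ => (1:ℝ)) q‖ ≤ 1 := by
        by_cases hq : q ∈ S
        · rw [Set.indicator_of_mem hq]; simp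
        · rw [Set.indicator_of_notMem hq, norm_zero]; exact zero_le_one
      calc ‖F q‖ = ‖Set.indicator G mono q.1‖ * ‖Set.indicator S (fun _ => (1:ℝ)) q‖ := by
            rw [hF_def]; exact norm_mul _ _
        _ ≤ max C 0 * 1 := mul_le_mul h1 h2 (norm_nonneg _) (le_max_right _ _)
        _ = max C 0 := mul_one _
  -- left: t-integral
  have hleft : ∀ x, (∫ t, F (x, t))
      = Set.indicator G (fun y => mono y * MvPolynomial.eval y g) x := by
    intro x
    have heq : (fun t => F (x, t)) = fun t => Set.indicator G mono x *
        Set.indicator (Set.Ioo 0 (MvPolynomial.eval x g)) (fun _ => (1:ℝ)) t :=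
      funext fun t => by simp only [hF_def]; rw [hfac]
    rw [heq, integral_const_mul, integral_indicator_const _ measurableSet_Ioo]
    rw [Real.volume_real_Ioo_of_le (hpos x), sub_zero, smul_eq_mul, mul_one]
    by_cases hx : x ∈ G
    · rw [Set.indicator_of_mem hx, Set.indicator_of_mem hx]
    · rw [Set.indicator_of_notMem hx, Set.indicator_of_notMem hx, zero_mul]
  -- right: x-integral
  have hintG : IntegrableOn mono G := hcont.continuousOn.integrableOn_compact hK
  have hright : ∀ t, (∫ x, F (x, t))
      = Set.indicator (Set.Ioo (0:ℝ) 1) (fun t => I1 - t ^ p * I1) t := by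
    intro t
    by_cases ht : t ∈ Set.Ioo (0:ℝ) 1
    · rw [Set.indicator_of_mem ht]
      have hsubm : MeasurableSet {x : Fin n → ℝ | MvPolynomial.eval x g ≤ t} :=
        (isClosed_le (MvPolynomial.continuous_eval g) continuous_const).measurableSet
      have hsub : {x : Fin n → ℝ | MvPolynomial.eval x g ≤ t} ⊆ G :=
        fun x hx => le_trans hx ht.2.le
      have hFx : (fun x => F (x, t))
          = Set.indicator (G \ {x : Fin n → ℝ | MvPolynomial.eval x g ≤ t}) mono := by
        funext x
        simp only [hF_def]
        by_cases hx : x ∈ G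
        · by_cases hlt : t < MvPolynomial.eval x g
          · have h1 : (x, t) ∈ S := ⟨ht.1, hlt⟩
            have h2 : x ∈ G \ {y : Fin n → ℝ | MvPolynomial.eval y g ≤ t} :=
              ⟨hx, fun hc => absurd hlt (not_lt.2 hc)⟩
            rw [Set.indicator_of_mem hx, Set.indicator_of_mem h1,
              Set.indicator_of_mem h2, mul_one]
          · have h1 : (x, t) ∉ S := fun h => hlt h.2
            have h2 : x ∉ G \ {y : Fin n → ℝ | MvPolynomial.eval y g ≤ t} :=
              fun h => h.2 (not_lt.1 hlt)
            rw [Set.indicator_of_notMem h1, Set.indicator_of_notMem h2, mul_zero]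
        · have h2 : x ∉ G \ {y : Fin n → ℝ | MvPolynomial.eval y g ≤ t} :=
            fun h => hx h.1
          rw [Set.indicator_of_notMem hx, Set.indicator_of_notMem h2, zero_mul]
      rw [hFx, integral_indicator (hGm.diff hsubm),
        integral_diff hsubm hintG hsub,
        sublevel_integral_scale hd g hg α hα ht.1]
    · rw [Set.indicator_of_notMem ht]
      have hFx : (fun x => F (x, t)) = fun _ => (0:ℝ) := by
        funext x
        simp only [hF_def]
        rcases not_and_or.1 (Set.mem_Ioo.not.1 ht) with h0 | h1
        · rw [Set.indicator_of_notMem (show (x,t) ∉ S from fun h => h0 h.1), mul_zero]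
        · by_cases hx : x ∈ G
          · have : (x, t) ∉ S := fun h =>
              h1 (lt_of_lt_of_le h.2 hx)
            rw [Set.indicator_of_notMem this, mul_zero]
          · rw [Set.indicator_of_notMem hx, zero_mul]
      rw [hFx, integral_zero]
  have hswap : (∫ x, ∫ t, F (x, t)) = ∫ t, ∫ x, F (x, t) :=
    integral_integral_swap hFint
  have hL : (∫ x, ∫ t, F (x, t))
      = ∫ x in G, mono x * MvPolynomial.eval x g := by
    rw [← integral_indicator hGm]
    exact integral_congr_ae (Filter.Eventually.of_forall hleft)
  have hR : (∫ t, ∫ x, F (x, t)) = ∫ t in Set.Ioo (0:ℝ) 1, (I1 - t ^ p * I1) := by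
    rw [← integral_indicator measurableSet_Ioo]
    exact integral_congr_ae (Filter.Eventually.of_forall hright)
  have hval : (∫ t in Set.Ioo (0:ℝ) 1, (I1 - t ^ p * I1))
      = (((n:ℝ) + d) / ((n:ℝ) + 2 * d)) * I1 := by
    have hp1 : (-1:ℝ) < p := by linarith
    have hint : IntegrableOn (fun t : ℝ => t ^ p) (Set.Ioo (0:ℝ) 1) := by
      have := (intervalIntegral.intervalIntegrable_rpow (μ := volume)
        (a := (0:ℝ)) (b := 1) (r := p) (Or.inl hppos.le)).1
      exact this.mono_set Set.Ioo_subset_Ioc_self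
    have hrpow : (∫ t in Set.Ioo (0:ℝ) 1, t ^ p) = 1 / (p + 1) := by
      rw [← MeasureTheory.integral_Ioc_eq_integral_Ioo,
        ← intervalIntegral.integral_of_le zero_le_one,
        integral_rpow (Or.inl hp1)]
      rw [Real.one_rpow, Real.zero_rpow (by positivity)]
      ring
    rw [integral_sub (integrableOn_const (C := I1) measure_Ioo_lt_top.ne)
      (hint.mul_const I1)]
    rw [integral_mul_const, hrpow, setIntegral_const]
    rw [Real.volume_real_Ioo_of_le zero_le_one, sub_zero, one_smul]
    have hd0 : (0:ℝ) < (n:ℝ) + 2 * d := by positivity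
    have hpd : p + 1 = ((n:ℝ) + 2 * d) / d := by
      rw [hp_def]; field_simp; ring
    rw [hpd]
    field_simp
    ring
  rw [← hL, hswap, hR, hval]


lemma e_inj {n d : ℕ} : Function.Injective
    (fun β : {a : Fin n → Fin (d + 1) // ∑ i, (a i : ℕ) = d} =>
      (Finsupp.equivFunOnFinite.symm fun i => (β.1 i : ℕ) : Fin n →₀ ℕ)) := by
  intro β γ h
  have h2 : (fun i => (β.1 i : ℕ)) = fun i => (γ.1 i : ℕ) :=
    Finsupp.equivFunOnFinite.symm.injective h
  ext i
  exact congrFun h2 i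

lemma support_subset_image {n d : ℕ} (g : MvPolynomial (Fin n) ℝ) (hg : g.IsHomogeneous d) :
    g.support ⊆ Finset.univ.image
      (fun β : {a : Fin n → Fin (d + 1) // ∑ i, (a i : ℕ) = d} =>
        (Finsupp.equivFunOnFinite.symm fun i => (β.1 i : ℕ) : Fin n →₀ ℕ)) := by
  intro σ hσ
  have hdeg : σ.degree = d := by
    rw [Finsupp.degree_eq_weight_one]; exact hg (MvPolynomial.mem_support_iff.1 hσ)
  have hsum : ∑ i : Fin n, σ i = d := by
    rw [← hdeg, Finsupp.degree]
    exact (Finset.sum_subset (Finset.subset_univ _)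
      (fun i _ hi => Finsupp.notMem_support_iff.1 hi)).symm
  have hle : ∀ i, σ i ≤ d := by
    intro i
    rw [← hsum]
    exact Finset.single_le_sum (fun j _ => Nat.zero_le _) (Finset.mem_univ i)
  refine Finset.mem_image.2 ⟨⟨fun i => ⟨σ i, Nat.lt_succ_of_le (hle i)⟩, hsum⟩,
    Finset.mem_univ _, ?_⟩
  simp only
  have : (fun i => ((⟨σ i, Nat.lt_succ_of_le (hle i)⟩ : Fin (d+1)) : ℕ)) = fun i => σ i := rfl
  rw [this]
  exact Finsupp.equivFunOnFinite_symm_coe σ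

lemma eval_sum_subtype {n d : ℕ} (g : MvPolynomial (Fin n) ℝ) (hg : g.IsHomogeneous d)
    (x : Fin n → ℝ) :
    MvPolynomial.eval x g = ∑ β : {a : Fin n → Fin (d + 1) // ∑ i, (a i : ℕ) = d},
      MvPolynomial.coeff (Finsupp.equivFunOnFinite.symm fun i => (β.1 i : ℕ)) g
        * ∏ i, x i ^ (β.1 i : ℕ) := by
  classical
  rw [MvPolynomial.eval_eq]
  have h1 : ∀ σ : Fin n →₀ ℕ, (∏ i ∈ σ.support, x i ^ σ i) = ∏ i : Fin n, x i ^ σ i :=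
    fun σ => Finset.prod_subset (Finset.subset_univ _)
      (fun i _ hi => by rw [Finsupp.notMem_support_iff.1 hi, pow_zero])
  have h2 : ∑ σ ∈ g.support, MvPolynomial.coeff σ g * ∏ i ∈ σ.support, x i ^ σ i
      = ∑ σ ∈ Finset.univ.image
          (fun β : {a : Fin n → Fin (d + 1) // ∑ i, (a i : ℕ) = d} =>
            (Finsupp.equivFunOnFinite.symm fun i => (β.1 i : ℕ) : Fin n →₀ ℕ)),
          MvPolynomial.coeff σ g * ∏ i ∈ σ.support, x i ^ σ i := by
    refine Finset.sum_subset (support_subset_image g hg) fun σ _ hσ => ?_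
    rw [MvPolynomial.notMem_support_iff.1 hσ, zero_mul]
  rw [h2, Finset.sum_image (fun β _ γ _ h => e_inj h)]
  refine Finset.sum_congr rfl fun β _ => ?_
  rw [h1]
  simp [Finsupp.equivFunOnFinite]

lemma mulVec_component {n d : ℕ} (g : MvPolynomial (Fin n) ℝ) (hg : g.IsHomogeneous d)
    (hK : IsCompact {x : Fin n → ℝ | MvPolynomial.eval x g ≤ 1}) (α : Fin n → ℕ) :
    ∑ β : {a : Fin n → Fin (d + 1) // ∑ i, (a i : ℕ) = d},
      (∫ x in {x : Fin n → ℝ | MvPolynomial.eval x g ≤ 1}, ∏ i, x i ^ (α i + (β.1 i : ℕ)))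
        * MvPolynomial.coeff (Finsupp.equivFunOnFinite.symm fun i => (β.1 i : ℕ)) g
    = ∫ x in {x : Fin n → ℝ | MvPolynomial.eval x g ≤ 1},
        (∏ i, x i ^ α i) * MvPolynomial.eval x g := by
  classical
  set G : Set (Fin n → ℝ) := {x : Fin n → ℝ | MvPolynomial.eval x g ≤ 1} with hG_def
  have hint : ∀ β : {a : Fin n → Fin (d + 1) // ∑ i, (a i : ℕ) = d},
      IntegrableOn (fun x : Fin n → ℝ =>
        (∏ i, x i ^ (α i + (β.1 i : ℕ)))
          * MvPolynomial.coeff (Finsupp.equivFunOnFinite.symm fun i => (β.1 i : ℕ)) g) G := by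
    intro β
    exact (Continuous.continuousOn (by fun_prop)).integrableOn_compact hK
  have step1 : ∀ β : {a : Fin n → Fin (d + 1) // ∑ i, (a i : ℕ) = d},
      (∫ x in G, ∏ i, x i ^ (α i + (β.1 i : ℕ)))
          * MvPolynomial.coeff (Finsupp.equivFunOnFinite.symm fun i => (β.1 i : ℕ)) g
        = ∫ x in G, (∏ i, x i ^ (α i + (β.1 i : ℕ)))
          * MvPolynomial.coeff (Finsupp.equivFunOnFinite.symm fun i => (β.1 i : ℕ)) g :=
    fun β => (integral_mul_const _ _).symm
  rw [Finset.sum_congr rfl fun β _ => step1 β,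
    ← integral_finset_sum Finset.univ fun β _ => hint β]
  refine integral_congr_ae (Filter.Eventually.of_forall fun x => ?_)
  simp only
  rw [eval_sum_subtype g hg x, Finset.mul_sum]
  refine Finset.sum_congr rfl fun β _ => ?_
  simp only [pow_add, Finset.prod_mul_distrib]
  ring

lemma pfun_zero_of_integral_sq_zero {n d : ℕ} (hd : 0 < d) (g : MvPolynomial (Fin n) ℝ)
    (hg : g.IsHomogeneous d)
    (hK : IsCompact {x : Fin n → ℝ | MvPolynomial.eval x g ≤ 1})
    (v : {a : Fin n → Fin (d + 1) // ∑ i, (a i : ℕ) = d} → ℝ)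
    (hzero : ∫ x in {x : Fin n → ℝ | MvPolynomial.eval x g ≤ 1},
        (∑ β : {a : Fin n → Fin (d + 1) // ∑ i, (a i : ℕ) = d},
          v β * ∏ i, x i ^ (β.1 i : ℕ)) ^ 2 = 0) :
    v = 0 := by
  classical
  set G : Set (Fin n → ℝ) := {x : Fin n → ℝ | MvPolynomial.eval x g ≤ 1} with hG_def
  set pfun : (Fin n → ℝ) → ℝ := fun x =>
    ∑ β : {a : Fin n → Fin (d + 1) // ∑ i, (a i : ℕ) = d},
      v β * ∏ i, x i ^ (β.1 i : ℕ) with hp_def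
  have hpcont : Continuous pfun := by fun_prop
  -- from zero integral of a nonneg continuous function: pfun = 0 a.e. on G
  have hint : Integrable (fun x => (pfun x)^2) (volume.restrict G) :=
    ((hpcont.pow 2).continuousOn).integrableOn_compact hK
  have hae : (fun x => (pfun x)^2) =ᵐ[volume.restrict G] 0 :=
    (integral_eq_zero_iff_of_nonneg (fun x => sq_nonneg (pfun x)) hint).1 hzero
  -- a ball around the origin inside G
  have h0mem : (0 : Fin n → ℝ) ∈ {x : Fin n → ℝ | MvPolynomial.eval x g < 1} := by
    have h1 : MvPolynomial.eval ((0:ℝ) • (0 : Fin n → ℝ)) g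
        = 0 ^ d * MvPolynomial.eval (0 : Fin n → ℝ) g := eval_smul_homog g hg 0 0
    rw [zero_smul, zero_pow hd.ne', zero_mul] at h1
    show MvPolynomial.eval (0 : Fin n → ℝ) g < 1
    rw [h1]; exact zero_lt_one
  obtain ⟨ε, hε, hball⟩ := Metric.isOpen_iff.1
    (isOpen_lt (MvPolynomial.continuous_eval g) continuous_const) 0 h0mem
  have hballG : Metric.ball (0 : Fin n → ℝ) ε ⊆ G :=
    fun x hx => show MvPolynomial.eval x g ≤ 1 from le_of_lt (hball hx)
  have hae2 : (fun x => (pfun x)^2) =ᵐ[volume.restrict (Metric.ball (0 : Fin n → ℝ) ε)] 0 :=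
    ae_restrict_of_ae_restrict_of_subset hballG hae
  have heqOn : Set.EqOn (fun x => (pfun x)^2) 0 (Metric.ball (0 : Fin n → ℝ) ε) :=
    Measure.eqOn_open_of_ae_eq hae2 Metric.isOpen_ball
      ((hpcont.pow 2).continuousOn) continuousOn_const
  have hball0 : ∀ y ∈ Metric.ball (0 : Fin n → ℝ) ε, pfun y = 0 := by
    intro y hy
    have := heqOn hy
    simpa using pow_eq_zero_iff (n := 2) (by norm_num) |>.1 this
  -- homogeneity of pfun
  have hphom : ∀ (c : ℝ) (x : Fin n → ℝ), pfun (c • x) = c ^ d * pfun x := by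
    intro c x
    rw [hp_def, Finset.mul_sum]
    refine Finset.sum_congr rfl fun β _ => ?_
    simp only [Pi.smul_apply, smul_eq_mul, mul_pow, Finset.prod_mul_distrib,
      Finset.prod_pow_eq_pow_sum]
    rw [β.2]
    ring
  -- pfun vanishes everywhere
  have hall : ∀ x, pfun x = 0 := by
    intro x
    set c : ℝ := ε / (2 * (‖x‖ + 1)) with hc_def
    have hxnorm : (0:ℝ) ≤ ‖x‖ := norm_nonneg x
    have hc : 0 < c := by positivity
    have hcx : c • x ∈ Metric.ball (0 : Fin n → ℝ) ε := by
      rw [Metric.mem_ball, dist_zero_right, norm_smul, Real.norm_eq_abs, abs_of_pos hc]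
      have he2 : c * (‖x‖ + 1) = ε / 2 := by
        rw [hc_def]; field_simp
      calc c * ‖x‖ ≤ c * (‖x‖ + 1) := by nlinarith
        _ = ε / 2 := he2
        _ < ε := by linarith
    have h1 := hball0 _ hcx
    rw [hphom c x] at h1
    have : c ^ d ≠ 0 := by positivity
    exact (mul_eq_zero.1 h1).resolve_left this
  -- conclude v = 0 via polynomial identity
  set q : MvPolynomial (Fin n) ℝ :=
    ∑ β : {a : Fin n → Fin (d + 1) // ∑ i, (a i : ℕ) = d},
      MvPolynomial.monomial (Finsupp.equivFunOnFinite.symm fun i => (β.1 i : ℕ)) (v β)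
    with hq_def
  have hqeval : ∀ x, MvPolynomial.eval x q = pfun x := by
    intro x
    rw [hq_def, map_sum]
    refine Finset.sum_congr rfl fun β _ => ?_
    rw [MvPolynomial.eval_monomial]
    congr 1
    rw [Finsupp.prod]
    refine (Finset.prod_subset (Finset.subset_univ _)
      (fun i _ hi => by rw [Finsupp.notMem_support_iff.1 hi, pow_zero])).trans ?_
    refine Finset.prod_congr rfl fun i _ => ?_
    simp [Finsupp.equivFunOnFinite]
  have hq0 : q = 0 := by
    apply MvPolynomial.funext
    intro x
    rw [hqeval x, hall x, map_zero]
  funext β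
  have hcoeff : MvPolynomial.coeff (Finsupp.equivFunOnFinite.symm fun i => (β.1 i : ℕ)) q
      = v β := by
    rw [hq_def]
    rw [MvPolynomial.coeff_sum]
    rw [Finset.sum_eq_single β]
    · rw [MvPolynomial.coeff_monomial, if_pos rfl]
    · intro γ _ hγ
      rw [MvPolynomial.coeff_monomial, if_neg (fun h => hγ (e_inj h))]
    · intro h
      exact absurd (Finset.mem_univ β) h
  rw [hq0] at hcoeff
  simp only [MvPolynomial.coeff_zero] at hcoeff
  exact hcoeff.symm


lemma M_isUnit {n d : ℕ} (hd : 0 < d) (g : MvPolynomial (Fin n) ℝ)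
    (hg : g.IsHomogeneous d)
    (hK : IsCompact {x : Fin n → ℝ | MvPolynomial.eval x g ≤ 1}) :
    IsUnit (Matrix.of (fun α β : {a : Fin n → Fin (d + 1) // ∑ i, (a i : ℕ) = d} =>
      ∫ x in {x : Fin n → ℝ | MvPolynomial.eval x g ≤ 1},
        ∏ i, x i ^ ((α.1 i : ℕ) + (β.1 i : ℕ)))) := by
  classical
  set G : Set (Fin n → ℝ) := {x : Fin n → ℝ | MvPolynomial.eval x g ≤ 1} with hG_def
  set A : Matrix {a : Fin n → Fin (d + 1) // ∑ i, (a i : ℕ) = d}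
      {a : Fin n → Fin (d + 1) // ∑ i, (a i : ℕ) = d} ℝ :=
    Matrix.of (fun α β => ∫ x in G, ∏ i, x i ^ ((α.1 i : ℕ) + (β.1 i : ℕ))) with hA_def
  rw [← Matrix.mulVec_injective_iff_isUnit]
  have h0 : ∀ v, A *ᵥ v = 0 → v = 0 := by
    intro v hv
    have hintm : ∀ (k : Fin n → ℕ), IntegrableOn (fun x : Fin n → ℝ => ∏ i, x i ^ k i) G :=
      fun k => (Continuous.continuousOn (by fun_prop)).integrableOn_compact hK
    have key : (∫ x in G, (∑ β : {a : Fin n → Fin (d + 1) // ∑ i, (a i : ℕ) = d},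
          v β * ∏ i, x i ^ (β.1 i : ℕ)) ^ 2)
        = ∑ α : {a : Fin n → Fin (d + 1) // ∑ i, (a i : ℕ) = d},
            v α * (A *ᵥ v) α := by
      have h1 : ∀ x : Fin n → ℝ,
          (∑ β : {a : Fin n → Fin (d + 1) // ∑ i, (a i : ℕ) = d},
            v β * ∏ i, x i ^ (β.1 i : ℕ)) ^ 2
          = ∑ α : {a : Fin n → Fin (d + 1) // ∑ i, (a i : ℕ) = d},
              ∑ β : {a : Fin n → Fin (d + 1) // ∑ i, (a i : ℕ) = d},
                v α * v β * ∏ i, x i ^ ((α.1 i : ℕ) + (β.1 i : ℕ)) := by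
        intro x
        rw [sq, Finset.sum_mul_sum]
        refine Finset.sum_congr rfl fun α _ => Finset.sum_congr rfl fun β _ => ?_
        simp only [pow_add, Finset.prod_mul_distrib]
        ring
      calc (∫ x in G, (∑ β : {a : Fin n → Fin (d + 1) // ∑ i, (a i : ℕ) = d},
              v β * ∏ i, x i ^ (β.1 i : ℕ)) ^ 2)
          = ∫ x in G, ∑ α : {a : Fin n → Fin (d + 1) // ∑ i, (a i : ℕ) = d},
              ∑ β : {a : Fin n → Fin (d + 1) // ∑ i, (a i : ℕ) = d},
                v α * v β * ∏ i, x i ^ ((α.1 i : ℕ) + (β.1 i : ℕ)) :=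
            integral_congr_ae (Filter.Eventually.of_forall fun x => h1 x)
        _ = ∑ α : {a : Fin n → Fin (d + 1) // ∑ i, (a i : ℕ) = d},
              ∫ x in G, ∑ β : {a : Fin n → Fin (d + 1) // ∑ i, (a i : ℕ) = d},
                v α * v β * ∏ i, x i ^ ((α.1 i : ℕ) + (β.1 i : ℕ)) :=
            integral_finset_sum _ (fun α _ => integrable_finset_sum _
              (fun β _ => ((hintm _).const_mul _)))
        _ = ∑ α : {a : Fin n → Fin (d + 1) // ∑ i, (a i : ℕ) = d},
              ∑ β : {a : Fin n → Fin (d + 1) // ∑ i, (a i : ℕ) = d},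
                v α * v β * ∫ x in G, ∏ i, x i ^ ((α.1 i : ℕ) + (β.1 i : ℕ)) := by
            refine Finset.sum_congr rfl fun α _ => ?_
            rw [integral_finset_sum _ (fun β _ => ((hintm _).const_mul _))]
            exact Finset.sum_congr rfl fun β _ => integral_const_mul _ _
        _ = ∑ α : {a : Fin n → Fin (d + 1) // ∑ i, (a i : ℕ) = d},
              v α * (A *ᵥ v) α := by
            refine Finset.sum_congr rfl fun α _ => ?_
            rw [Matrix.mulVec, dotProduct, Finset.mul_sum]
            exact Finset.sum_congr rfl fun β _ => by rw [hA_def, Matrix.of_apply]; ring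
    have hzero : (∫ x in G, (∑ β : {a : Fin n → Fin (d + 1) // ∑ i, (a i : ℕ) = d},
          v β * ∏ i, x i ^ (β.1 i : ℕ)) ^ 2) = 0 := by
      rw [key, hv]
      simp
    exact pfun_zero_of_integral_sq_zero hd g hg hK v hzero
  intro v w hvw
  have := h0 (v - w) (by rw [Matrix.mulVec_sub, hvw, sub_self])
  exact sub_eq_zero.1 this

/-- Main theorem: the coefficient vector of a homogeneous polynomial `g` of degree `d`
with compact sublevel set `G = {g ≤ 1}` is recovered from the moments of order `d` and
`2d` of the Lebesgue measure on `G` via `g = ((n+d)/(n+2d)) M_d(λ)⁻¹ λ^{(d)}`. -/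
theorem recover_coefficients (n d : ℕ) (hn : 0 < n) (hd : 0 < d)
    (g : MvPolynomial (Fin n) ℝ) (hg : g.IsHomogeneous d)
    (hK : IsCompact {x : Fin n → ℝ | MvPolynomial.eval x g ≤ 1}) :
    (fun β : {a : Fin n → Fin (d + 1) // ∑ i, (a i : ℕ) = d} =>
        MvPolynomial.coeff (Finsupp.equivFunOnFinite.symm fun i => (β.1 i : ℕ)) g) =
      (((n : ℝ) + d) / ((n : ℝ) + 2 * d)) •
        ((Matrix.of (fun α β : {a : Fin n → Fin (d + 1) // ∑ i, (a i : ℕ) = d} =>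
            ∫ x in {x : Fin n → ℝ | MvPolynomial.eval x g ≤ 1},
              ∏ i, x i ^ ((α.1 i : ℕ) + (β.1 i : ℕ))))⁻¹ *ᵥ
          fun α : {a : Fin n → Fin (d + 1) // ∑ i, (a i : ℕ) = d} =>
            ∫ x in {x : Fin n → ℝ | MvPolynomial.eval x g ≤ 1},
              ∏ i, x i ^ (α.1 i : ℕ)) := by
  classical
  set G : Set (Fin n → ℝ) := {x : Fin n → ℝ | MvPolynomial.eval x g ≤ 1} with hG_def
  set A : Matrix {a : Fin n → Fin (d + 1) // ∑ i, (a i : ℕ) = d}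
      {a : Fin n → Fin (d + 1) // ∑ i, (a i : ℕ) = d} ℝ :=
    Matrix.of (fun α β => ∫ x in G, ∏ i, x i ^ ((α.1 i : ℕ) + (β.1 i : ℕ))) with hA_def
  set lam : {a : Fin n → Fin (d + 1) // ∑ i, (a i : ℕ) = d} → ℝ :=
    fun α => ∫ x in G, ∏ i, x i ^ (α.1 i : ℕ) with hlam_def
  set gvec : {a : Fin n → Fin (d + 1) // ∑ i, (a i : ℕ) = d} → ℝ :=
    fun β => MvPolynomial.coeff (Finsupp.equivFunOnFinite.symm fun i => (β.1 i : ℕ)) g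
    with hgvec_def
  set c : ℝ := ((n : ℝ) + d) / ((n : ℝ) + 2 * d) with hc_def
  have hMg : A *ᵥ gvec = c • lam := by
    funext α
    rw [Matrix.mulVec, dotProduct]
    have h1 : ∑ β : {a : Fin n → Fin (d + 1) // ∑ i, (a i : ℕ) = d},
        A α β * gvec β
        = ∫ x in G, (∏ i, x i ^ (α.1 i : ℕ)) * MvPolynomial.eval x g :=
      mulVec_component g hg hK (fun i => (α.1 i : ℕ))
    rw [h1, key_identity hd g hg hK (fun i => (α.1 i : ℕ)) α.2]
    simp [hlam_def, hc_def, hG_def]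
  have hU : IsUnit A := M_isUnit hd g hg hK
  have hdet : IsUnit A.det := (Matrix.isUnit_iff_isUnit_det A).1 hU
  have hcancel : A⁻¹ *ᵥ (A *ᵥ gvec) = gvec := by
    rw [Matrix.mulVec_mulVec, Matrix.nonsing_inv_mul A hdet, Matrix.one_mulVec]
  have : gvec = c • (A⁻¹ *ᵥ lam) := by
    rw [← hcancel, hMg, Matrix.mulVec_smul]
  exact this
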